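/- arXiv:2111.06222 — 4 statements merged into one kernel-verified Lean document; each statement's English description precedes it below -/
import Mathlib

section
/- Let 0 < ε < 1 and C ∈ (ε, ∞). Then there exist a constant K > 0 and m₀ ∈ ℕ such that for every natural number m ≥ m₀, sup over γ ∈ [ε, C] of | (γ/m) · ∑_{j=1}^{m} (j/m)^{γ−1} − 1 | ≤ K / m^{ε}. In other words, sup_{ε ≤ γ ≤ C} | (γ/m) ∑_{j=1}^m (j/m)^{γ−1} − 1 | = O(m^{−ε}) as m → ∞, uniformly over γ in the compact interval [ε, C]. -/
open Set Finset

-- MVT for rpow: for 0 ≤ a < b, ∃ c ∈ (a,b), b^γ - a^γ = γ * c^(γ-1) * (b-a)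
lemma rpow_mvt {γ a b : ℝ} (hγ : 0 < γ) (ha : 0 ≤ a) (hab : a < b) :
    ∃ c ∈ Set.Ioo a b, b ^ γ - a ^ γ = γ * c ^ (γ - 1) * (b - a) := by
  have hcont : ContinuousOn (fun x : ℝ => x ^ γ) (Set.Icc a b) := fun x _ =>
    (Real.continuousAt_rpow_const x γ (Or.inr hγ.le)).continuousWithinAt
  have hderiv : ∀ x ∈ Set.Ioo a b, HasDerivAt (fun x : ℝ => x ^ γ) (γ * x ^ (γ - 1)) x := by
    intro x hx
    exact Real.hasDerivAt_rpow_const (Or.inl (lt_of_le_of_lt ha hx.1).ne')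
  obtain ⟨c, hc, hceq⟩ := exists_hasDerivAt_eq_slope (fun x : ℝ => x ^ γ)
    (fun x => γ * x ^ (γ - 1)) hab hcont hderiv
  refine ⟨c, hc, ?_⟩
  have hb : b - a ≠ 0 := sub_ne_zero.mpr hab.ne'
  field_simp at hceq
  linarith [hceq]

lemma stepA {γ x : ℝ} (hγ0 : 0 < γ) (hγ1 : γ ≤ 1) (hx : 0 ≤ x) :
    γ * (x + 1) ^ (γ - 1) ≤ (x + 1) ^ γ - x ^ γ := by
  obtain ⟨c, hc, hceq⟩ := rpow_mvt hγ0 hx (by linarith : x < x + 1)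
  have h1 : (x + 1) ^ (γ - 1) ≤ c ^ (γ - 1) :=
    Real.rpow_le_rpow_of_nonpos (lt_of_le_of_lt hx hc.1) hc.2.le (by linarith)
  rw [hceq]
  have : x + 1 - x = 1 := by ring
  rw [this, mul_one]
  exact mul_le_mul_of_nonneg_left h1 hγ0.le

lemma stepB' {γ x : ℝ} (hγ0 : 0 < γ) (hγ1 : γ ≤ 1) (hx : 0 < x) :
    (x + 1) ^ γ - x ^ γ ≤ γ * x ^ (γ - 1) := by
  obtain ⟨c, hc, hceq⟩ := rpow_mvt hγ0 hx.le (by linarith : x < x + 1)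
  have h1 : c ^ (γ - 1) ≤ x ^ (γ - 1) :=
    Real.rpow_le_rpow_of_nonpos hx hc.1.le (by linarith)
  rw [hceq]
  have h2 : x + 1 - x = 1 := by ring
  rw [h2, mul_one]
  exact mul_le_mul_of_nonneg_left h1 hγ0.le

lemma stepC {γ x : ℝ} (hγ1 : 1 ≤ γ) (hx : 0 ≤ x) :
    γ * x ^ (γ - 1) ≤ (x + 1) ^ γ - x ^ γ := by
  obtain ⟨c, hc, hceq⟩ := rpow_mvt (by linarith : (0:ℝ) < γ) hx (by linarith : x < x + 1)
  have h1 : x ^ (γ - 1) ≤ c ^ (γ - 1) :=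
    Real.rpow_le_rpow hx hc.1.le (by linarith)
  rw [hceq]
  have h2 : x + 1 - x = 1 := by ring
  rw [h2, mul_one]
  exact mul_le_mul_of_nonneg_left h1 (by linarith)

lemma stepD {γ x : ℝ} (hγ1 : 1 ≤ γ) (hx : 0 ≤ x) :
    (x + 1) ^ γ - x ^ γ ≤ γ * (x + 1) ^ (γ - 1) := by
  obtain ⟨c, hc, hceq⟩ := rpow_mvt (by linarith : (0:ℝ) < γ) hx (by linarith : x < x + 1)
  have h1 : c ^ (γ - 1) ≤ (x + 1) ^ (γ - 1) :=
    Real.rpow_le_rpow (le_trans hx hc.1.le) hc.2.le (by linarith)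
  rw [hceq]
  have h2 : x + 1 - x = 1 := by ring
  rw [h2, mul_one]
  exact mul_le_mul_of_nonneg_left h1 (by linarith)


/-- Lemma 1 of Robinson (1995): uniformly over `γ ∈ [ε, C]`,
`|(γ/m) ∑_{j=1}^m (j/m)^(γ-1) - 1| = O(m^{-ε})` as `m → ∞`. -/
theorem robinson_lemma1 (ε C : ℝ) (hε0 : 0 < ε) (hε1 : ε < 1) (hC : ε < C) :
    ∃ K > (0 : ℝ), ∃ m₀ : ℕ, ∀ m : ℕ, m₀ ≤ m → ∀ γ ∈ Set.Icc ε C,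
      |γ / m * ∑ j ∈ Finset.Icc 1 m, ((j : ℝ) / m) ^ (γ - 1) - 1| ≤ K / (m : ℝ) ^ ε := by
  refine ⟨C + 1, by linarith, 1, ?_⟩
  intro m hm γ hγ
  obtain ⟨hγε, hγC⟩ := hγ
  have hγ0 : 0 < γ := lt_of_lt_of_le hε0 hγε
  have hm0 : (0:ℝ) < m := by exact_mod_cast hm
  have hm1 : (1:ℝ) ≤ m := by exact_mod_cast hm
  have hmε : (0:ℝ) < (m:ℝ) ^ ε := Real.rpow_pos_of_pos hm0 ε
  have hmγ : (0:ℝ) < (m:ℝ) ^ γ := Real.rpow_pos_of_pos hm0 γ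
  set S : ℝ := ∑ i ∈ Finset.range m, ((i:ℝ) + 1) ^ (γ - 1) with hSdef
  have hpow : (m:ℝ) ^ γ = (m:ℝ) ^ (γ - 1) * m := by
    have h := Real.rpow_add hm0 (γ - 1) 1
    rw [Real.rpow_one] at h
    rw [show γ - 1 + 1 = γ by ring] at h
    exact h
  -- rewrite the LHS
  have hrw : γ / m * ∑ j ∈ Finset.Icc 1 m, ((j : ℝ) / m) ^ (γ - 1) = γ * S / (m:ℝ) ^ γ := by
    rw [← Finset.Ico_add_one_right_eq_Icc, Finset.sum_Ico_eq_sum_range]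
    have hc : ∀ i ∈ Finset.range m,
        (((1 + i : ℕ) : ℝ) / m) ^ (γ - 1) = ((i:ℝ) + 1) ^ (γ - 1) / (m:ℝ) ^ (γ - 1) := by
      intro i _
      rw [show ((1 + i : ℕ) : ℝ) = (i:ℝ) + 1 by push_cast; ring]
      rw [Real.div_rpow (by positivity) hm0.le]
    simp only [Nat.add_sub_cancel]
    rw [Finset.sum_congr rfl hc, ← Finset.sum_div, ← hSdef, hpow]
    rw [div_mul_div_comm, mul_comm ((m:ℝ)) ((m:ℝ) ^ (γ - 1))]
  -- telescoping over range m
  have hT1 : ∑ i ∈ Finset.range m, (((i:ℝ) + 1) ^ γ - (i:ℝ) ^ γ) = (m:ℝ) ^ γ := by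
    have h := Finset.sum_range_sub (fun i : ℕ => ((i:ℝ)) ^ γ) m
    push_cast at h
    rw [Real.zero_rpow hγ0.ne', sub_zero] at h
    exact h
  rw [hrw]
  rcases le_or_gt γ 1 with h1 | h1
  · -- case γ ≤ 1
    have hub : γ * S ≤ (m:ℝ) ^ γ := by
      rw [← hT1, hSdef, Finset.mul_sum]
      exact Finset.sum_le_sum fun i _ => stepA hγ0 h1 (by positivity)
    have hT2 : ∑ i ∈ Finset.range (m - 1), (((i:ℝ) + 1 + 1) ^ γ - ((i:ℝ) + 1) ^ γ)
        = (m:ℝ) ^ γ - 1 := by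
      have h := Finset.sum_range_sub (fun i : ℕ => ((i:ℝ) + 1) ^ γ) (m - 1)
      push_cast [Nat.cast_sub hm] at h
      simpa using h
    have hlb : (m:ℝ) ^ γ - 1 ≤ γ * S := by
      calc (m:ℝ) ^ γ - 1 = ∑ i ∈ Finset.range (m - 1), (((i:ℝ) + 1 + 1) ^ γ - ((i:ℝ) + 1) ^ γ) :=
            hT2.symm
        _ ≤ ∑ i ∈ Finset.range (m - 1), γ * ((i:ℝ) + 1) ^ (γ - 1) :=
            Finset.sum_le_sum fun i _ => stepB' hγ0 h1 (by positivity)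
        _ = γ * ∑ i ∈ Finset.range (m - 1), ((i:ℝ) + 1) ^ (γ - 1) := by rw [Finset.mul_sum]
        _ ≤ γ * S := by
            apply mul_le_mul_of_nonneg_left _ hγ0.le
            apply Finset.sum_le_sum_of_subset_of_nonneg
              (Finset.range_subset_range.mpr (Nat.sub_le m 1))
            intro i _ _; positivity
    have habs : |γ * S / (m:ℝ) ^ γ - 1| ≤ 1 / (m:ℝ) ^ γ := by
      rw [div_sub_one hmγ.ne', abs_div, abs_of_pos hmγ]
      gcongr
      rw [abs_le]
      constructor <;> linarith
    have hfin : 1 / (m:ℝ) ^ γ ≤ (C + 1) / (m:ℝ) ^ ε := by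
      have hme : (m:ℝ) ^ ε ≤ (m:ℝ) ^ γ := Real.rpow_le_rpow_of_exponent_le hm1 hγε
      exact div_le_div₀ (by linarith) (by linarith) hmε hme
    exact le_trans habs hfin
  · -- case 1 < γ
    have hlb : (m:ℝ) ^ γ ≤ γ * S := by
      rw [← hT1, hSdef, Finset.mul_sum]
      exact Finset.sum_le_sum fun i _ => stepD h1.le (by positivity)
    have hub : γ * S ≤ (m:ℝ) ^ γ + γ * (m:ℝ) ^ (γ - 1) := by
      have h0 : γ * ∑ i ∈ Finset.range m, (i:ℝ) ^ (γ - 1) ≤ (m:ℝ) ^ γ := by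
        rw [← hT1, Finset.mul_sum]
        exact Finset.sum_le_sum fun i _ => stepC h1.le (by positivity)
      have hshift : S ≤ (∑ i ∈ Finset.range m, (i:ℝ) ^ (γ - 1)) + (m:ℝ) ^ (γ - 1) := by
        have ha := Finset.sum_range_succ' (fun i : ℕ => ((i:ℝ)) ^ (γ - 1)) m
        have hb := Finset.sum_range_succ (fun i : ℕ => ((i:ℝ)) ^ (γ - 1)) m
        push_cast at ha hb
        have h0' : (0:ℝ) ≤ (0:ℝ) ^ (γ - 1) := Real.rpow_nonneg le_rfl _
        rw [hSdef]
        nlinarith [ha, hb]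
      have := mul_le_mul_of_nonneg_left hshift hγ0.le
      nlinarith [h0]
    have habs : |γ * S / (m:ℝ) ^ γ - 1| ≤ γ / m := by
      have hq : γ * (m:ℝ) ^ (γ - 1) / (m:ℝ) ^ γ = γ / m := by
        rw [hpow]
        have hne : (m:ℝ) ^ (γ - 1) ≠ 0 := by positivity
        field_simp
      rw [div_sub_one hmγ.ne', abs_div, abs_of_pos hmγ, ← hq]
      gcongr
      rw [abs_le]
      constructor <;> linarith
    have hfin : γ / m ≤ (C + 1) / (m:ℝ) ^ ε := by
      have hme : (m:ℝ) ^ ε ≤ m := by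
        have := Real.rpow_le_rpow_of_exponent_le hm1 hε1.le
        rwa [Real.rpow_one] at this
      exact div_le_div₀ (by linarith) (by linarith) hmε hme
    exact le_trans habs hfin
end

section
/- For every natural number m ≥ 2, | (1/m) · ∑_{j=1}^{m} log j − log m + 1 | ≤ (2 + log(m − 1)) / m. -/
lemma rob_step1 (m : ℕ) (hm : 1 ≤ m) :
    Real.log (m + 1) - Real.log m ≤ 1 / m := by
  have hm0 : (0:ℝ) < m := by exact_mod_cast hm
  have h := Real.log_le_sub_one_of_pos (show (0:ℝ) < ((m:ℝ)+1)/m by positivity)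
  rw [Real.log_div (by positivity) (by positivity)] at h
  have : ((m:ℝ)+1)/m - 1 = 1/m := by field_simp; ring
  linarith [this ▸ h]

lemma rob_step2 (m : ℕ) (hm : 1 ≤ m) :
    1 / ((m:ℝ) + 1) ≤ Real.log (m + 1) - Real.log m := by
  have hm0 : (0:ℝ) < m := by exact_mod_cast hm
  have h := Real.log_le_sub_one_of_pos (show (0:ℝ) < (m:ℝ)/((m:ℝ)+1) by positivity)
  rw [Real.log_div (by positivity) (by positivity)] at h
  have : (m:ℝ)/((m:ℝ)+1) - 1 = -(1/((m:ℝ)+1)) := by field_simp; ring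
  linarith [this ▸ h]

lemma rob_aux (m : ℕ) (hm : 1 ≤ m) :
    (∑ j ∈ Finset.Icc 1 m, Real.log j) - Real.log m ≤ (m:ℝ) * Real.log m - m + 1 ∧
    (m:ℝ) * Real.log m - m + 1 ≤ ∑ j ∈ Finset.Icc 1 m, Real.log j := by
  induction m, hm using Nat.le_induction with
  | base => simp
  | succ n hn ih =>
    obtain ⟨ih1, ih2⟩ := ih
    have hn0 : (0:ℝ) < n := by exact_mod_cast hn
    have h1 := rob_step1 n hn
    have h2 := rob_step2 n hn
    rw [Finset.sum_Icc_succ_top (by omega)]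
    push_cast
    push_cast at ih1 ih2 h1 h2
    have h2' : 1 ≤ (Real.log ((n:ℝ) + 1) - Real.log n) * ((n:ℝ) + 1) :=
      (div_le_iff₀ (by positivity)).mp h2
    have h1' : (Real.log ((n:ℝ) + 1) - Real.log n) * (n:ℝ) ≤ 1 :=
      (le_div_iff₀ hn0).mp h1
    constructor
    · nlinarith [h2']
    · nlinarith [h1']

/-- Lemma 2 of Robinson (1995): for `m ≥ 2`,
`|(1/m) ∑_{j=1}^m log j - log m + 1| ≤ (2 + log (m-1)) / m`. -/
theorem robinson_lemma2 (m : ℕ) (hm : 2 ≤ m) :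
    |(1 / (m : ℝ)) * ∑ j ∈ Finset.Icc 1 m, Real.log j - Real.log m + 1| ≤
      (2 + Real.log ((m : ℝ) - 1)) / m := by
  obtain ⟨h1, h2⟩ := rob_aux m (by omega)
  have hm0 : (0:ℝ) < m := by positivity
  have hm0' : (2:ℝ) ≤ m := by exact_mod_cast hm
  set S := ∑ j ∈ Finset.Icc 1 m, Real.log j with hS
  -- E := S - m log m + m ∈ [1, 1 + log m]
  have hE1 : (1:ℝ) ≤ S - m * Real.log m + m := by linarith
  have hE2 : S - m * Real.log m + m ≤ 1 + Real.log m := by linarith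
  -- log m ≤ 1 + log (m-1)
  have hlog : Real.log m ≤ 1 + Real.log ((m:ℝ) - 1) := by
    have h2' : Real.log 2 ≤ 1 := by
      have := Real.log_le_sub_one_of_pos (show (0:ℝ) < 2 by norm_num)
      linarith
    have hmle : (m:ℝ) ≤ 2 * ((m:ℝ) - 1) := by linarith
    have := Real.log_le_log (by positivity) hmle
    rw [Real.log_mul (by norm_num) (by linarith)] at this
    linarith
  have key : |S - m * Real.log m + m| ≤ 2 + Real.log ((m:ℝ) - 1) := by
    rw [abs_le]
    constructor <;> linarith
  have : (1 / (m:ℝ)) * S - Real.log m + 1 = (S - m * Real.log m + m) / m := by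
    field_simp
  rw [this, abs_div, abs_of_pos hm0]
  exact div_le_div_of_nonneg_right key hm0.le
end

section
/- Let l ≥ 1 and let x_1, …, x_l be real numbers with x_i > −1/2 for all i. Then the l × l real symmetric matrix M defined by M_{pq} = cos( π (x_p − x_q) / 2 ) / (1 + x_p + x_q) is positive semidefinite. -/
open MeasureTheory intervalIntegral Real

private lemma rpow_prod_ae (a b : ℝ) :
    ∀ᵐ t ∂(volume : Measure ℝ), t ∈ Set.uIoc (0:ℝ) 1 → t ^ (a + b) = t ^ a * t ^ b := by
  filter_upwards with t ht
  rw [Set.uIoc_of_le (by norm_num : (0:ℝ) ≤ 1)] at ht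
  exact Real.rpow_add ht.1 a b

private lemma rpow_prod_intInt {a b : ℝ} (h : -1 < a + b) :
    IntervalIntegrable (fun t : ℝ => t ^ a * t ^ b) volume 0 1 :=
  (intervalIntegrable_rpow' h).congr_ae (by
    filter_upwards [ae_restrict_mem measurableSet_uIoc] with t ht
    rw [Set.uIoc_of_le (by norm_num : (0:ℝ) ≤ 1)] at ht
    exact Real.rpow_add ht.1 a b)

private lemma rpow_prod_integral {a b : ℝ} (h : -1 < a + b) :
    ∫ t in (0:ℝ)..1, t ^ a * t ^ b = 1 / (1 + a + b) := by
  rw [← intervalIntegral.integral_congr_ae (rpow_prod_ae a b),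
    integral_rpow (Or.inl h), Real.one_rpow, Real.zero_rpow (by linarith)]
  ring

private lemma gram_nonneg {l : ℕ} (f : Fin l → ℝ → ℝ)
    (hf : ∀ p q, IntervalIntegrable (fun t => f p t * f q t) volume 0 1)
    (v : Fin l → ℝ) :
    0 ≤ ∑ p, ∑ q, v p * v q * ∫ t in (0:ℝ)..1, f p t * f q t := by
  have step1 : ∀ p, ∑ q, v p * v q * ∫ t in (0:ℝ)..1, f p t * f q t
      = ∫ t in (0:ℝ)..1, ∑ q, v p * v q * (f p t * f q t) := by
    intro p
    rw [intervalIntegral.integral_finset_sum fun q _ => (hf p q).const_mul (v p * v q)]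
    exact Finset.sum_congr rfl fun q _ => (intervalIntegral.integral_const_mul _ _).symm
  have hint : ∀ p, IntervalIntegrable
      (fun t => ∑ q, v p * v q * (f p t * f q t)) volume 0 1 := by
    intro p
    have h := IntervalIntegrable.sum (μ := volume) (a := (0:ℝ)) (b := 1) Finset.univ
      (fun q (_ : q ∈ Finset.univ) => (hf p q).const_mul (v p * v q))
    have e : (∑ q : Fin l, fun t => v p * v q * (f p t * f q t))
        = fun t => ∑ q, v p * v q * (f p t * f q t) := by ext t; simp
    rwa [e] at h
  calc (0:ℝ) ≤ ∫ t in (0:ℝ)..1, (∑ p, v p * f p t) ^ 2 :=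
        intervalIntegral.integral_nonneg (by norm_num) fun t _ => sq_nonneg _
    _ = ∫ t in (0:ℝ)..1, ∑ p, ∑ q, v p * v q * (f p t * f q t) := by
        apply intervalIntegral.integral_congr
        intro t _
        show (∑ p, v p * f p t) ^ 2 = ∑ p, ∑ q, v p * v q * (f p t * f q t)
        rw [sq, Finset.sum_mul_sum]
        exact Finset.sum_congr rfl fun p _ => Finset.sum_congr rfl fun q _ => by ring
    _ = ∑ p, ∑ q, v p * v q * ∫ t in (0:ℝ)..1, f p t * f q t := by
        rw [intervalIntegral.integral_finset_sum fun p _ => hint p]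
        exact Finset.sum_congr rfl fun p _ => (step1 p).symm

/-- The matrix `M_{pq} = cos(π(x_p - x_q)/2)/(1 + x_p + x_q)` (with all
`x_i > -1/2`) is positive semidefinite: it is `Re[U] ⊙ V` from the paper's
function `H(d)`, the real part of a Gram matrix in `L²(0,1)`. -/
theorem cos_div_matrix_posSemidef (l : ℕ) (hl : 1 ≤ l) (x : Fin l → ℝ)
    (hx : ∀ i, -(1 / 2) < x i) :
    (Matrix.of fun p q : Fin l =>
      Real.cos (Real.pi * (x p - x q) / 2) / (1 + x p + x q)).PosSemidef := by
  have hsum : ∀ p q : Fin l, -1 < x p + x q := fun p q => by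
    have := hx p; have := hx q; linarith
  set f : Fin l → ℝ → ℝ := fun p t => Real.cos (Real.pi * x p / 2) * t ^ (x p) with hf
  set g : Fin l → ℝ → ℝ := fun p t => Real.sin (Real.pi * x p / 2) * t ^ (x p) with hg
  have hfint : ∀ p q, IntervalIntegrable (fun t => f p t * f q t) volume 0 1 := by
    intro p q
    have h := (rpow_prod_intInt (hsum p q)).const_mul
      (Real.cos (Real.pi * x p / 2) * Real.cos (Real.pi * x q / 2))
    refine h.congr_ae (Filter.Eventually.of_forall fun t => ?_)
    simp only [hf]; ring
  have hgint : ∀ p q, IntervalIntegrable (fun t => g p t * g q t) volume 0 1 := by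
    intro p q
    have h := (rpow_prod_intInt (hsum p q)).const_mul
      (Real.sin (Real.pi * x p / 2) * Real.sin (Real.pi * x q / 2))
    refine h.congr_ae (Filter.Eventually.of_forall fun t => ?_)
    simp only [hg]; ring
  have hM : ∀ p q : Fin l,
      Real.cos (Real.pi * (x p - x q) / 2) / (1 + x p + x q)
        = (∫ t in (0:ℝ)..1, f p t * f q t) + ∫ t in (0:ℝ)..1, g p t * g q t := by
    intro p q
    have h1 : (∫ t in (0:ℝ)..1, f p t * f q t)
        = Real.cos (Real.pi * x p / 2) * Real.cos (Real.pi * x q / 2)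
          * (1 / (1 + x p + x q)) := by
      rw [← rpow_prod_integral (hsum p q), ← intervalIntegral.integral_const_mul]
      apply intervalIntegral.integral_congr
      intro t _; simp only [hf]; ring
    have h2 : (∫ t in (0:ℝ)..1, g p t * g q t)
        = Real.sin (Real.pi * x p / 2) * Real.sin (Real.pi * x q / 2)
          * (1 / (1 + x p + x q)) := by
      rw [← rpow_prod_integral (hsum p q), ← intervalIntegral.integral_const_mul]
      apply intervalIntegral.integral_congr
      intro t _; simp only [hg]; ring
    have hc : Real.cos (Real.pi * (x p - x q) / 2)
        = Real.cos (Real.pi * x p / 2) * Real.cos (Real.pi * x q / 2)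
          + Real.sin (Real.pi * x p / 2) * Real.sin (Real.pi * x q / 2) := by
      rw [show Real.pi * (x p - x q) / 2 = Real.pi * x p / 2 - Real.pi * x q / 2 by ring,
        Real.cos_sub]
    rw [h1, h2, hc]; ring
  rw [Matrix.posSemidef_iff_dotProduct_mulVec]
  constructor
  · ext p q
    simp only [Matrix.conjTranspose_apply, Matrix.of_apply, star_trivial]
    rw [show Real.pi * (x q - x p) / 2 = -(Real.pi * (x p - x q) / 2) by ring, Real.cos_neg]
    ring_nf
  · intro v
    simp only [dotProduct, Matrix.mulVec, Matrix.of_apply, Pi.star_apply, star_trivial,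
      RCLike.re_to_real]
    have key : ∑ p, v p * ∑ q, Real.cos (Real.pi * (x p - x q) / 2) / (1 + x p + x q) * v q
        = (∑ p, ∑ q, v p * v q * ∫ t in (0:ℝ)..1, f p t * f q t)
          + ∑ p, ∑ q, v p * v q * ∫ t in (0:ℝ)..1, g p t * g q t := by
      simp only [Finset.mul_sum, ← Finset.sum_add_distrib]
      refine Finset.sum_congr rfl fun p _ => Finset.sum_congr rfl fun q _ => ?_
      rw [hM p q]; ring
    rw [key]
    exact add_nonneg (gram_nonneg f hfint v) (gram_nonneg g hgint v)
end

section
/- Let l ≥ 1, let x_1, …, x_l be real numbers with x_i > −1/2 for all i, let M be the l × l matrix with entries M_{pq} = cos( π (x_p − x_q) / 2 ) / (1 + x_p + x_q), and let G be an l × l real symmetric positive semidefinite matrix. Then det( M ⊙ G ) ≥ det(G) · ∏_{i=1}^{l} 1/(1 + 2x_i), where ⊙ denotes the entrywise (Hadamard) product. In particular, with H(x) := det(M ⊙ G) and B(x) := det(G) · ∏_i (1 + 2x_i)^{−1}, one has H(x) ≥ B(x) with equality when all x_i = 0. -/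
open Matrix Finset Real MeasureTheory Set

section Oppenheim

set_option linter.unusedSectionVars false

variable {N : Type*} [Fintype N] [DecidableEq N]

open scoped MatrixOrder

lemma psd_exists_conjTranspose_mul_self {A : Matrix N N ℝ} (hA : A.PosSemidef) :
    ∃ B : Matrix N N ℝ, A = Bᴴ * B := by
  refine ⟨CFC.sqrt A, ?_⟩
  have hS : (CFC.sqrt A).PosSemidef := (CFC.sqrt_nonneg A).posSemidef
  rw [hS.1.eq, CFC.sqrt_mul_sqrt_self A hA.nonneg]




lemma rankOne_posSemidef (c : ℝ) (hc : 0 ≤ c) (w : N → ℝ) :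
    (Matrix.of fun i j => c * (w i * w j)).PosSemidef := by
  refine Matrix.PosSemidef.of_dotProduct_mulVec_nonneg ?_ ?_
  · ext i j
    simp only [Matrix.conjTranspose_apply, Matrix.of_apply, star_trivial]
    ring
  · intro y
    have : (star y) ⬝ᵥ ((Matrix.of fun i j => c * (w i * w j)) *ᵥ y)
        = c * (∑ i, y i * w i) ^ 2 := by
      simp only [dotProduct, Matrix.mulVec, dotProduct, Matrix.of_apply,
        Pi.star_apply, star_trivial]
      rw [sq, Finset.sum_mul_sum, Finset.mul_sum]
      refine Finset.sum_congr rfl fun i _ => ?_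
      rw [Finset.mul_sum, Finset.mul_sum]
      refine Finset.sum_congr rfl fun j _ => ?_
      ring
    rw [this]
    positivity

/-- Schur product theorem over ℝ. -/
lemma hadamard_posSemidef {A B : Matrix N N ℝ} (hA : A.PosSemidef) (hB : B.PosSemidef) :
    (A.hadamard B).PosSemidef := by
  obtain ⟨C, hC⟩ := psd_exists_conjTranspose_mul_self hB
  refine Matrix.PosSemidef.of_dotProduct_mulVec_nonneg ?_ ?_
  · ext i j
    have hA' := congrFun (congrFun hA.1 i) j
    have hB' := congrFun (congrFun hB.1 i) j
    simp only [Matrix.conjTranspose_apply, star_trivial, Matrix.hadamard_apply] at *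
    rw [hA', hB']
  · intro x
    have key : (star x) ⬝ᵥ ((A.hadamard B) *ᵥ x)
        = ∑ k, (star fun p => x p * C k p) ⬝ᵥ (A *ᵥ fun p => x p * C k p) := by
      simp only [dotProduct, Matrix.mulVec, Pi.star_apply,
        star_trivial, Matrix.hadamard_apply, hC, Matrix.mul_apply,
        Matrix.conjTranspose_apply, Finset.mul_sum, Finset.sum_mul]
      conv_rhs => rw [Finset.sum_comm]
      refine Finset.sum_congr rfl fun p _ => ?_
      conv_rhs => rw [Finset.sum_comm]
      refine Finset.sum_congr rfl fun q _ => ?_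
      refine Finset.sum_congr rfl fun k _ => ?_
      ring
    rw [key]
    exact Finset.sum_nonneg fun k _ => hA.dotProduct_mulVec_nonneg _




lemma psd_det_nonneg {A : Matrix N N ℝ} (hA : A.PosSemidef) : 0 ≤ A.det := by
  rw [hA.1.det_eq_prod_eigenvalues]
  exact Finset.prod_nonneg fun i _ => hA.eigenvalues_nonneg i

lemma one_le_det_one_add {Q : Matrix N N ℝ} (hQ : Q.PosSemidef) :
    1 ≤ (1 + Q).det := by
  have hsp := hQ.1.conjStarAlgAut_star_eigenvectorUnitary
  rw [Unitary.conjStarAlgAut_star_apply] at hsp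
  set U := (hQ.1.eigenvectorUnitary : Matrix N N ℝ) with hU
  have hUU : star U * U = 1 := Unitary.star_mul_self_of_mem hQ.1.eigenvectorUnitary.2
  have key : star U * (1 + Q) * U = Matrix.diagonal (fun i => 1 + hQ.1.eigenvalues i) := by
    rw [Matrix.mul_add, Matrix.add_mul, hsp, Matrix.mul_one, hUU]
    rw [← Matrix.diagonal_one, Matrix.diagonal_add]
    congr 1
  have hdetU : (star U).det * U.det = 1 := by
    rw [← Matrix.det_mul, hUU, Matrix.det_one]
  have := congrArg Matrix.det key
  rw [Matrix.det_mul, Matrix.det_mul, Matrix.det_diagonal] at this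
  have h2 : (1 + Q).det = ∏ i, (1 + hQ.1.eigenvalues i) := by
    calc (1 + Q).det = ((star U).det * U.det) * (1 + Q).det := by rw [hdetU, one_mul]
      _ = (star U).det * (1 + Q).det * U.det := by ring
      _ = ∏ i, (1 + hQ.1.eigenvalues i) := this
  rw [h2]
  calc (1:ℝ) = ∏ _i : N, (1:ℝ) := by simp
    _ ≤ ∏ i, (1 + hQ.1.eigenvalues i) :=
      Finset.prod_le_prod (fun i _ => zero_le_one)
        (fun i _ => by linarith [hQ.eigenvalues_nonneg i])

lemma det_le_det_add {X P : Matrix N N ℝ} (hX : X.PosSemidef) (hP : P.PosSemidef) :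
    X.det ≤ (X + P).det := by
  by_cases h0 : X.det = 0
  · rw [h0]; exact psd_det_nonneg (hX.add hP)
  · set R := CFC.sqrt X with hR
    have hRps : R.PosSemidef := (CFC.sqrt_nonneg X).posSemidef
    have hRR : R * R = X := CFC.sqrt_mul_sqrt_self X hX.nonneg
    have hdetR : R.det * R.det = X.det := by rw [← Matrix.det_mul, hRR]
    have hRdet : IsUnit R.det := by
      rw [isUnit_iff_ne_zero]
      intro h; apply h0; rw [← hdetR, h, mul_zero]
    have hRinv : R * R⁻¹ = 1 := Matrix.mul_nonsing_inv R hRdet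
    have hRinv' : R⁻¹ * R = 1 := Matrix.nonsing_inv_mul R hRdet
    have hRinvH : (R⁻¹)ᴴ = R⁻¹ := by rw [Matrix.conjTranspose_nonsing_inv, hRps.1]
    have hQps : (R⁻¹ * P * R⁻¹).PosSemidef := by
      have := hP.conjTranspose_mul_mul_same (R⁻¹)
      rwa [hRinvH] at this
    have key : X + P = R * (1 + R⁻¹ * P * R⁻¹) * R := by
      rw [Matrix.mul_add, Matrix.mul_one, Matrix.add_mul, hRR]
      congr 1
      calc P = (R * R⁻¹) * P * (R⁻¹ * R) := by
            rw [hRinv, hRinv', Matrix.one_mul, Matrix.mul_one]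
        _ = R * (R⁻¹ * P * R⁻¹) * R := by simp only [Matrix.mul_assoc]
    have hdet : (X + P).det = X.det * (1 + R⁻¹ * P * R⁻¹).det := by
      rw [key, Matrix.det_mul, Matrix.det_mul, ← hdetR]; ring
    rw [hdet]
    have h1 := one_le_det_one_add hQps
    nlinarith [psd_det_nonneg hX]





lemma psd_diag_nonneg {M : Matrix N N ℝ} (hM : M.PosSemidef) (i : N) : 0 ≤ M i i := by
  simpa using hM.dotProduct_mulVec_nonneg (Pi.single i 1)

lemma psd_col_zero {M : Matrix N N ℝ} (hM : M.PosSemidef) (j : N) (h : M j j = 0)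
    (i : N) : M i j = 0 := by
  obtain ⟨C, hC⟩ := psd_exists_conjTranspose_mul_self hM
  have hj : ∀ k, C k j = 0 := by
    have hsum : ∑ k, C k j * C k j = 0 := by
      have := congrFun (congrFun hC j) j
      simp only [Matrix.mul_apply, Matrix.conjTranspose_apply, star_trivial] at this
      rw [h] at this
      exact this.symm
    intro k
    have := Finset.sum_eq_zero_iff_of_nonneg (fun k _ => mul_self_nonneg (C k j)) |>.mp hsum k
      (Finset.mem_univ k)
    exact mul_self_eq_zero.mp this
  have := congrFun (congrFun hC i) j
  simp only [Matrix.mul_apply, Matrix.conjTranspose_apply, star_trivial] at this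
  rw [this]
  simp [hj]

lemma posDef_fin_one {D : Matrix (Fin 1) (Fin 1) ℝ} (h : 0 < D 0 0) : D.PosDef := by
  refine Matrix.PosDef.of_dotProduct_mulVec_pos ?_ ?_
  · ext i j
    fin_cases i; fin_cases j
    simp [Matrix.conjTranspose_apply]
  · intro x hx
    have hx0 : x 0 ≠ 0 := by
      intro h0; apply hx; funext i; fin_cases i; exact h0
    have hq : star x ⬝ᵥ D *ᵥ x = D 0 0 * (x 0 * x 0) := by
      simp [dotProduct, Matrix.mulVec, Fin.sum_univ_one]
      ring
    rw [hq]
    exact mul_pos h (mul_self_pos.mpr hx0)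

lemma oppenheim_step (n : ℕ)
    (IH : ∀ (A B : Matrix (Fin n) (Fin n) ℝ), A.PosSemidef → B.PosSemidef →
      (∏ i, A i i) * B.det ≤ (A.hadamard B).det)
    (A B : Matrix (Fin n ⊕ Fin 1) (Fin n ⊕ Fin 1) ℝ) (hA : A.PosSemidef) (hB : B.PosSemidef) :
    (∏ i, A i i) * B.det ≤ (A.hadamard B).det := by
  have hsymmA : ∀ p q, A q p = A p q := fun p q => by
    have := congrFun (congrFun hA.1 p) q
    simpa using this
  have hsymmB : ∀ p q, B q p = B p q := fun p q => by
    have := congrFun (congrFun hB.1 p) q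
    simpa using this
  by_cases hα : A (Sum.inr 0) (Sum.inr 0) = 0
  · have hcol := psd_col_zero hA (Sum.inr 0) hα
    have h1 : (A.hadamard B).det = 0 :=
      Matrix.det_eq_zero_of_column_eq_zero (Sum.inr 0)
        (fun i => by simp [Matrix.hadamard_apply, hcol i])
    have h2 : (∏ i : Fin n ⊕ Fin 1, A i i) = 0 :=
      Finset.prod_eq_zero (Finset.mem_univ (Sum.inr 0)) hα
    rw [h1, h2, zero_mul]
  by_cases hd : B (Sum.inr 0) (Sum.inr 0) = 0
  · have hcol := psd_col_zero hB (Sum.inr 0) hd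
    have h1 : (A.hadamard B).det = 0 :=
      Matrix.det_eq_zero_of_column_eq_zero (Sum.inr 0)
        (fun i => by simp [Matrix.hadamard_apply, hcol i])
    have h2 : B.det = 0 :=
      Matrix.det_eq_zero_of_column_eq_zero (Sum.inr 0) hcol
    rw [h1, h2, mul_zero]
  -- main case
  have hα' : 0 < A (Sum.inr 0) (Sum.inr 0) :=
    lt_of_le_of_ne (psd_diag_nonneg hA _) (Ne.symm hα)
  have hd' : 0 < B (Sum.inr 0) (Sum.inr 0) :=
    lt_of_le_of_ne (psd_diag_nonneg hB _) (Ne.symm hd)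
  set α := A (Sum.inr 0) (Sum.inr 0) with hαdef
  set d := B (Sum.inr 0) (Sum.inr 0) with hddef
  set a1 := A.toBlocks₁₁ with ha1
  set ab := A.toBlocks₁₂ with hab
  set aD := A.toBlocks₂₂ with haD
  set b1 := B.toBlocks₁₁ with hb1
  set bb := B.toBlocks₁₂ with hbb
  set bD := B.toBlocks₂₂ with hbD
  have hαne : α ≠ 0 := hα'.ne'
  have hdne : d ≠ 0 := hd'.ne'
  have hAblk : A = Matrix.fromBlocks a1 ab abᴴ aD := by
    ext i j
    cases i with
    | inl i => cases j with
      | inl j => rfl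
      | inr j => rfl
    | inr i => cases j with
      | inl j =>
        simp only [Matrix.fromBlocks, Matrix.of_apply, Sum.elim_inr, Sum.elim_inl,
          Matrix.conjTranspose_apply, star_trivial]
        exact hsymmA (Sum.inl j) (Sum.inr i)
      | inr j => rfl
  have hBblk : B = Matrix.fromBlocks b1 bb bbᴴ bD := by
    ext i j
    cases i with
    | inl i => cases j with
      | inl j => rfl
      | inr j => rfl
    | inr i => cases j with
      | inl j =>
        simp only [Matrix.fromBlocks, Matrix.of_apply, Sum.elim_inr, Sum.elim_inl,
          Matrix.conjTranspose_apply, star_trivial]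
        exact hsymmB (Sum.inl j) (Sum.inr i)
      | inr j => rfl
  have haD00 : aD 0 0 = α := rfl
  have hbD00 : bD 0 0 = d := rfl
  have haDpos : aD.PosDef := posDef_fin_one (by rw [haD00]; exact hα')
  have hbDpos : bD.PosDef := posDef_fin_one (by rw [hbD00]; exact hd')
  haveI : Invertible aD := aD.invertibleOfIsUnitDet
    (by rw [Matrix.det_fin_one, haD00]; exact isUnit_iff_ne_zero.mpr hα'.ne')
  haveI : Invertible bD := bD.invertibleOfIsUnitDet
    (by rw [Matrix.det_fin_one, hbD00]; exact isUnit_iff_ne_zero.mpr hd'.ne')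
  have haDinv : aD⁻¹ = Matrix.of (fun _ _ => α⁻¹) := by
    apply Matrix.inv_eq_right_inv
    ext i j
    fin_cases i; fin_cases j
    simp [Matrix.mul_apply, Fin.sum_univ_one, haD00]
    exact mul_inv_cancel₀ hα'.ne'
  have hbDinv : bD⁻¹ = Matrix.of (fun _ _ => d⁻¹) := by
    apply Matrix.inv_eq_right_inv
    ext i j
    fin_cases i; fin_cases j
    simp [Matrix.mul_apply, Fin.sum_univ_one, hbD00]
    exact mul_inv_cancel₀ hd'.ne'
  -- Schur complements
  set SA := a1 - ab * aD⁻¹ * abᴴ with hSAdef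
  set SB := b1 - bb * bD⁻¹ * bbᴴ with hSBdef
  have hSA : SA.PosSemidef := by
    rw [hSAdef]
    exact (Matrix.PosDef.fromBlocks₂₂ a1 ab haDpos).mp (hAblk ▸ hA)
  have hSB : SB.PosSemidef := by
    rw [hSBdef]
    exact (Matrix.PosDef.fromBlocks₂₂ b1 bb hbDpos).mp (hBblk ▸ hB)
  -- B determinant
  have hdetB : B.det = d * SB.det := by
    conv_lhs => rw [hBblk]
    rw [Matrix.det_fromBlocks₂₂, Matrix.invOf_eq_nonsing_inv, Matrix.det_fin_one, hbD00, hSBdef]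
  -- hadamard block structure
  have hhad : A.hadamard B = Matrix.fromBlocks (a1.hadamard b1) (ab.hadamard bb)
      ((ab.hadamard bb)ᴴ) (aD.hadamard bD) := by
    ext i j
    cases i <;> cases j <;>
      simp [Matrix.hadamard_apply, Matrix.fromBlocks, Matrix.toBlocks₁₁, Matrix.toBlocks₁₂,
        Matrix.toBlocks₂₂, ha1, hab, haD, hb1, hbb, hbD, Matrix.conjTranspose_apply,
        hsymmA, hsymmB]
  have habD00 : (aD.hadamard bD) 0 0 = α * d := rfl
  haveI : Invertible (aD.hadamard bD) := (aD.hadamard bD).invertibleOfIsUnitDet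
    (by rw [Matrix.det_fin_one, habD00]
        exact isUnit_iff_ne_zero.mpr (mul_pos hα' hd').ne')
  have habDinv : (aD.hadamard bD)⁻¹ = Matrix.of (fun _ _ => (α * d)⁻¹) := by
    apply Matrix.inv_eq_right_inv
    ext i j
    fin_cases i; fin_cases j
    simp [Matrix.mul_apply, Fin.sum_univ_one, habD00]
    rw [show aD 0 0 = α from rfl, show bD 0 0 = d from rfl]
    field_simp
  set S := (a1.hadamard b1) - (ab.hadamard bb) * (aD.hadamard bD)⁻¹ * (ab.hadamard bb)ᴴ
    with hSdef
  have hdetAB : (A.hadamard B).det = (α * d) * S.det := by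
    rw [hhad, Matrix.det_fromBlocks₂₂, Matrix.invOf_eq_nonsing_inv, Matrix.det_fin_one, habD00,
      hSdef]
  -- rank-one residual
  set R := bb * bD⁻¹ * bbᴴ with hRdef
  have hRps : R.PosSemidef := by
    have heq : R = Matrix.of (fun i j => d⁻¹ * (bb i 0 * bb j 0)) := by
      ext i j
      simp [hRdef, Matrix.mul_apply, Fin.sum_univ_one, hbDinv, Matrix.conjTranspose_apply]
      ring
    rw [heq]
    exact rankOne_posSemidef d⁻¹ (inv_nonneg.mpr hd'.le) _
  -- key identity
  have hkey : S = (a1.hadamard SB) + (SA.hadamard R) := by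
    ext i j
    simp only [hSdef, hSAdef, hSBdef, hRdef, Matrix.sub_apply, Matrix.add_apply,
      Matrix.hadamard_apply, Matrix.mul_apply, Fin.sum_univ_one, haDinv, hbDinv, habDinv,
      Matrix.conjTranspose_apply, Matrix.of_apply, star_trivial, mul_inv]
    ring
  -- positivity ingredients
  have ha1ps : a1.PosSemidef := by
    have := hA.submatrix Sum.inl
    exact this
  have hX : (a1.hadamard SB).PosSemidef := hadamard_posSemidef ha1ps hSB
  have hP : (SA.hadamard R).PosSemidef := hadamard_posSemidef hSA hRps
  have hmono : (a1.hadamard SB).det ≤ S.det := by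
    rw [hkey]
    exact det_le_det_add hX hP
  have hIH : (∏ i, a1 i i) * SB.det ≤ (a1.hadamard SB).det := IH a1 SB ha1ps hSB
  -- assemble
  have hprod : (∏ i : Fin n ⊕ Fin 1, A i i) = (∏ i, a1 i i) * α := by
    rw [Fintype.prod_sum_type]
    congr 1
    rw [Fin.prod_univ_one]
  rw [hprod, hdetB, hdetAB]
  have hstep : (∏ i, a1 i i) * SB.det ≤ S.det := le_trans hIH hmono
  calc (∏ i, a1 i i) * α * (d * SB.det) = (α * d) * ((∏ i, a1 i i) * SB.det) := by ring
    _ ≤ (α * d) * S.det := by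
        exact mul_le_mul_of_nonneg_left hstep (mul_pos hα' hd').le

lemma oppenheim : ∀ (n : ℕ) (A B : Matrix (Fin n) (Fin n) ℝ), A.PosSemidef → B.PosSemidef →
    (∏ i, A i i) * B.det ≤ (A.hadamard B).det := by
  intro n
  induction n with
  | zero =>
    intro A B hA hB
    simp [Matrix.det_fin_zero]
  | succ n IH =>
    intro A B hA hB
    set e : Fin n ⊕ Fin 1 ≃ Fin (n + 1) := finSumFinEquiv with he
    have hsub : ((A.submatrix e e).hadamard (B.submatrix e e)) = (A.hadamard B).submatrix e e :=
      by ext i j; rfl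
    have h1 : ((A.submatrix e e).hadamard (B.submatrix e e)).det = (A.hadamard B).det := by
      rw [hsub, Matrix.det_submatrix_equiv_self]
    have h2 : (B.submatrix e e).det = B.det := Matrix.det_submatrix_equiv_self e B
    have h3 : (∏ i : Fin n ⊕ Fin 1, (A.submatrix e e) i i) = ∏ i, A i i :=
      Equiv.prod_comp e (fun i => A i i)
    rw [← h1, ← h2, ← h3]
    exact oppenheim_step n IH _ _ (hA.submatrix e) (hB.submatrix e)



lemma integral_exp_neg_mul {b : ℝ} (hb : 0 < b) :
    ∫ t in Ioi (0:ℝ), Real.exp (-(b * t)) = b⁻¹ := by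
  have h := integral_rpow_mul_exp_neg_mul_Ioi (a := 1) one_pos hb
  rw [Real.Gamma_one, mul_one, rpow_one, one_div] at h
  rw [← h]
  refine setIntegral_congr_fun measurableSet_Ioi (fun t ht => ?_)
  rw [show (1:ℝ) - 1 = 0 by ring, rpow_zero, one_mul]

lemma cauchy_posSemidef {l : ℕ} (a : Fin l → ℝ) (ha : ∀ i, 0 < a i) :
    (Matrix.of fun p q => (a p + a q)⁻¹).PosSemidef := by
  refine Matrix.PosSemidef.of_dotProduct_mulVec_nonneg ?_ ?_
  · ext i j
    simp only [Matrix.conjTranspose_apply, Matrix.of_apply, star_trivial]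
    rw [add_comm]
  · intro y
    have hint : ∀ p q : Fin l, Integrable (fun t => y p * y q * Real.exp (-((a p + a q) * t)))
        (volume.restrict (Ioi (0:ℝ))) := by
      intro p q
      have h := exp_neg_integrableOn_Ioi 0 (add_pos (ha p) (ha q))
      simp only [neg_mul] at h
      exact h.const_mul (y p * y q)
    have key : (star y) ⬝ᵥ ((Matrix.of fun p q => (a p + a q)⁻¹) *ᵥ y)
        = ∫ t in Ioi (0:ℝ), (∑ p, y p * Real.exp (-(a p * t))) ^ 2 := by
      have step1 : (star y) ⬝ᵥ ((Matrix.of fun p q => (a p + a q)⁻¹) *ᵥ y)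
          = ∑ p, ∑ q, ∫ t in Ioi (0:ℝ), y p * y q * Real.exp (-((a p + a q) * t)) := by
        simp only [dotProduct, Matrix.mulVec, Pi.star_apply, star_trivial,
          Matrix.of_apply, Finset.mul_sum]
        refine Finset.sum_congr rfl fun p _ => ?_
        refine Finset.sum_congr rfl fun q _ => ?_
        rw [MeasureTheory.integral_const_mul, integral_exp_neg_mul (add_pos (ha p) (ha q))]
        ring
      have step2 : ∑ p, ∑ q, (∫ t in Ioi (0:ℝ), y p * y q * Real.exp (-((a p + a q) * t)))
          = ∫ t in Ioi (0:ℝ), ∑ p, ∑ q, y p * y q * Real.exp (-((a p + a q) * t)) := by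
        rw [MeasureTheory.integral_finset_sum _
          (fun p _ => integrable_finset_sum _ (fun q _ => hint p q))]
        exact Finset.sum_congr rfl fun p _ =>
          (MeasureTheory.integral_finset_sum _ (fun q _ => hint p q)).symm
      rw [step1, step2]
      refine setIntegral_congr_fun measurableSet_Ioi (fun t _ => ?_)
      rw [sq, Finset.sum_mul_sum]
      refine Finset.sum_congr rfl fun p _ => Finset.sum_congr rfl fun q _ => ?_
      rw [show -((a p + a q) * t) = -(a p * t) + -(a q * t) by ring, Real.exp_add]
      ring
    rw [key]
    exact MeasureTheory.integral_nonneg (fun t => sq_nonneg _)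


end Oppenheim

/-- Oppenheim-type inequality `H(x) ≥ B(x)` from the consistency proof: with
`M_{pq} = cos(π(x_p - x_q)/2)/(1 + x_p + x_q)` (all `x_i > -1/2`) and `G` real
symmetric positive semidefinite, `det(M ⊙ G) ≥ det G · ∏_i (1 + 2x_i)^{-1}`,
with equality when all `x_i = 0`. -/
theorem det_hadamard_ge_det_mul_prod (l : ℕ) (hl : 1 ≤ l) (x : Fin l → ℝ)
    (hx : ∀ i, -(1 / 2) < x i) (M : Matrix (Fin l) (Fin l) ℝ)
    (hM : ∀ p q, M p q = Real.cos (Real.pi * (x p - x q) / 2) / (1 + x p + x q))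
    (G : Matrix (Fin l) (Fin l) ℝ) (hG : G.PosSemidef) :
    (Matrix.hadamard M G).det ≥ G.det * ∏ i, 1 / (1 + 2 * x i) ∧
      ((∀ i, x i = 0) →
        (Matrix.hadamard M G).det = G.det * ∏ i, 1 / (1 + 2 * x i)) := by
  set a : Fin l → ℝ := fun i => x i + 1 / 2 with hadef
  have ha : ∀ i, 0 < a i := fun i => by have := hx i; simp only [hadef]; linarith
  set u : Fin l → ℝ := fun i => Real.cos (Real.pi * x i / 2) with hu
  set v : Fin l → ℝ := fun i => Real.sin (Real.pi * x i / 2) with hv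
  set W : Matrix (Fin l) (Fin l) ℝ :=
    (Matrix.of fun p q => (1:ℝ) * (u p * u q)) + (Matrix.of fun p q => (1:ℝ) * (v p * v q))
    with hW
  have hWps : W.PosSemidef :=
    (rankOne_posSemidef 1 zero_le_one u).add (rankOne_posSemidef 1 zero_le_one v)
  have hM' : M = (Matrix.of fun p q => (a p + a q)⁻¹).hadamard W := by
    ext p q
    simp only [Matrix.hadamard_apply, Matrix.add_apply, Matrix.of_apply, hW]
    rw [hM p q, show Real.pi * (x p - x q) / 2 = Real.pi * x p / 2 - Real.pi * x q / 2 by ring,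
      Real.cos_sub, show (1 : ℝ) + x p + x q = (a p) + (a q) by simp [hadef]; ring,
      div_eq_inv_mul]
    ring
  have hMps : M.PosSemidef := by
    rw [hM']
    exact hadamard_posSemidef (cauchy_posSemidef a ha) hWps
  have hMdiag : ∀ i, M i i = 1 / (1 + 2 * x i) := by
    intro i
    rw [hM i i, sub_self, mul_zero, zero_div, Real.cos_zero]
    congr 1
    ring
  have hprodeq : (∏ i, 1 / (1 + 2 * x i)) = ∏ i, M i i :=
    Finset.prod_congr rfl fun i _ => (hMdiag i).symm
  constructor
  · have := oppenheim l M G hMps hG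
    rw [ge_iff_le, hprodeq, mul_comm]
    exact this
  · intro hz
    have hMone : ∀ p q, M p q = 1 := by
      intro p q
      rw [hM p q, hz p, hz q]
      norm_num
    have hMG : Matrix.hadamard M G = G := by
      ext p q
      rw [Matrix.hadamard_apply, hMone p q, one_mul]
    have hp1 : (∏ i, 1 / (1 + 2 * x i)) = 1 := by
      refine Finset.prod_eq_one fun i _ => ?_
      rw [hz i]
      norm_num
    rw [hMG, hp1, mul_one]
end
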